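/- For every type σ and every function f in B(σB): B̂(∀σ) f = 1 if and only if f c = 1 for every c in Bσ. -/

import Mathlib

namespace PTT


/-- Simple types over a single base type `B`. -/
inductive Ty : Type
  | base : Ty
  | arrow : Ty → Ty → Ty
deriving DecidableEq

/-- Names: the constants `⊥` and `→`, and variables (an index together with a type). -/
inductive Name : Type
  | bot : Name
  | imp : Name
  | var : ℕ → Ty → Name
deriving DecidableEq

/-- The type of a name. -/
def Name.ty : Name → Ty
  | .bot => .base
  | .imp => .arrow .base (.arrow .base .base)
  | .var _ σ => σ

/-- Terms: names, abstraction over a variable, application. -/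
inductive Tm : Type
  | name : Name → Tm
  | lam : ℕ → Ty → Tm → Tm
  | app : Tm → Tm → Tm
deriving DecidableEq

/-- The term `⊥`. -/
def botTm : Tm := .name .bot

/-- The variable `(n, σ)` as a term. -/
def vr (n : ℕ) (σ : Ty) : Tm := .name (.var n σ)

/-- Implication `s → t`. -/
def impTm (s t : Tm) : Tm := .app (.app (.name .imp) s) t

/-- `⊤ := ⊥ → ⊥`. -/
def topTm : Tm := impTm botTm botTm

/-- `¬ s := s → ⊥`. -/
def negTm (s : Tm) : Tm := impTm s botTm

/-- `s ∨ t := (s → t) → t`. -/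
def orTm (s t : Tm) : Tm := impTm (impTm s t) t

/-- `s ∧ t := ¬(¬s ∨ ¬t)`. -/
def andTm (s t : Tm) : Tm := negTm (orTm (negTm s) (negTm t))

/-- `s ≡ t := (s → t) ∧ (t → s)`. -/
def equivTm (s t : Tm) : Tm := andTm (impTm s t) (impTm t s)

/-- The typing relation. -/
inductive HasTy : Tm → Ty → Prop
  | name (x : Name) : HasTy (.name x) x.ty
  | lam {n σ s τ} : HasTy s τ → HasTy (.lam n σ s) (.arrow σ τ)
  | app {s t σ τ} : HasTy s (.arrow σ τ) → HasTy t σ → HasTy (.app s t) τ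

/-- Free variables of a term. -/
def fv : Tm → Finset (ℕ × Ty)
  | .name (.var n σ) => {(n, σ)}
  | .name _ => ∅
  | .lam n σ s => (fv s).erase (n, σ)
  | .app s t => fv s ∪ fv t

/-- A term is closed if it has no free variables. -/
def Closed (s : Tm) : Prop := fv s = ∅

/-- Capture-free parallel substitution (bound variables are renamed). -/
def substAux (ρ : ℕ × Ty → Tm) : Tm → Tm
  | .name (.var n σ) => ρ (n, σ)
  | .name x => .name x
  | .app s t => .app (substAux ρ s) (substAux ρ t)
  | .lam n σ s =>
      let used : Finset ℕ :=
        ((fv s).erase (n, σ)).biUnion (fun p => (fv (ρ p)).image Prod.fst)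
      let m : ℕ := used.sup id + 1
      .lam m σ (substAux (Function.update ρ (n, σ) (vr m σ)) s)

/-- Capture-free substitution `s[(n,σ) := t]`. -/
def subst (s : Tm) (n : ℕ) (σ : Ty) (t : Tm) : Tm :=
  substAux (Function.update (fun p => vr p.1 p.2) (n, σ) t) s

/-- Contexts: terms with exactly one hole (possibly under binders). -/
inductive Ctx : Type
  | hole : Ctx
  | lam : ℕ → Ty → Ctx → Ctx
  | appL : Ctx → Tm → Ctx
  | appR : Tm → Ctx → Ctx

/-- Filling the hole of a context with a term (capturing is allowed). -/
def Ctx.fill : Ctx → Tm → Tm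
  | .hole, s => s
  | .lam n σ C, s => .lam n σ (C.fill s)
  | .appL C t, s => .app (C.fill s) t
  | .appR t C, s => .app t (C.fill s)

/-- `C` captures the variable `p` if the hole of `C` lies below a binder for `p`. -/
def Ctx.captures : Ctx → ℕ × Ty → Prop
  | .hole, _ => False
  | .lam n σ C, p => p = (n, σ) ∨ C.captures p
  | .appL C _, p => C.captures p
  | .appR _ C, p => C.captures p

/-- `C` is admissible for `A` if it captures no variable free in `A`. -/
def Ctx.Admissible (C : Ctx) (A : Finset Tm) : Prop :=
  ∀ p ∈ A.biUnion fv, ¬ C.captures p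

/-- `s` is a subterm of `t`. -/
def Subterm (s t : Tm) : Prop := ∃ C : Ctx, C.fill s = t

/-- β-redexes. -/
def IsBetaRedex : Tm → Prop
  | .app (.lam _ _ _) _ => True
  | _ => False

/-- A term is β-normal if none of its subterms is a β-redex. -/
def BetaNormal (t : Tm) : Prop := ∀ s, Subterm s t → ¬ IsBetaRedex s

/-- Lambda equivalence: the least equivalence on well-typed terms containing
α-, β-, η-conversion and closed under arbitrary contexts. -/
inductive LamEq : Tm → Tm → Prop
  | refl {s σ} : HasTy s σ → LamEq s s
  | symm {s t} : LamEq s t → LamEq t s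
  | trans {s t u} : LamEq s t → LamEq t u → LamEq s u
  | alpha {n m σ s τ} : HasTy (.lam n σ s) τ → (m, σ) ∉ fv s →
      LamEq (.lam n σ s) (.lam m σ (subst s n σ (vr m σ)))
  | beta {n σ s t τ} : HasTy (.app (.lam n σ s) t) τ →
      LamEq (.app (.lam n σ s) t) (subst s n σ t)
  | eta {n σ s τ} : HasTy (.lam n σ (.app s (vr n σ))) τ → (n, σ) ∉ fv s →
      LamEq (.lam n σ (.app s (vr n σ))) s
  | ctx {s t σ} (C : Ctx) : LamEq s t → HasTy (C.fill s) σ → LamEq (C.fill s) (C.fill t)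

/-- The standard set-theoretic interpretation of types: `B` is interpreted as the
two truth values (`Bool`), functional types as full function spaces. -/
def Ty.sem : Ty → Type
  | .base => Bool
  | .arrow σ τ => σ.sem → τ.sem

def Ty.semDefault : (σ : Ty) → σ.sem
  | .base => false
  | .arrow _ τ => fun _ => τ.semDefault

instance (σ : Ty) : Inhabited σ.sem := ⟨σ.semDefault⟩

noncomputable instance Ty.semFintype : (σ : Ty) → Fintype σ.sem
  | .base => inferInstanceAs (Fintype Bool)
  | .arrow σ τ =>
      letI := Ty.semFintype σ
      letI := Ty.semFintype τ
      letI := Classical.decEq σ.sem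
      inferInstanceAs (Fintype (σ.sem → τ.sem))

def Ty.semCast {σ τ : Ty} (h : σ = τ) (v : σ.sem) : τ.sem := h ▸ v

/-- An interpretation assigns to every variable a value of the corresponding type
(the constants `⊥` and `→` have their values fixed). -/
def Interp : Type := ℕ → (σ : Ty) → σ.sem

def Interp.update (I : Interp) (n : ℕ) (σ : Ty) (v : σ.sem) : Interp :=
  fun m τ => if h : m = n ∧ τ = σ then Ty.semCast h.2.symm v else I m τ

/-- Type inference. -/
def typeOf : Tm → Option Ty
  | .name x => some x.ty
  | .lam _ σ s => (typeOf s).map (Ty.arrow σ)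
  | .app s t =>
      match typeOf s, typeOf t with
      | some (.arrow σ τ), some σ' => if σ = σ' then some τ else none
      | _, _ => none

/-- The canonical extension `Î` of an interpretation to all terms: `eval I s σ`
is the value of `s` at type `σ` (on well-typed terms this is the usual
denotation; junk default values are used at type mismatches). -/
def eval (I : Interp) : Tm → (σ : Ty) → σ.sem
  | .name (.var n τ), σ => if h : τ = σ then Ty.semCast h (I n τ) else default
  | .name .bot, σ =>
      match σ with
      | .base => false
      | _ => default
  | .name .imp, σ =>
      match σ with
      | .arrow .base (.arrow .base .base) => fun a b => !a || b
      | _ => default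
  | .app s t, σ =>
      match typeOf t with
      | some τ => eval I s (.arrow τ σ) (eval I t τ)
      | none => default
  | .lam n τ s, σ =>
      match σ with
      | .base => default
      | .arrow σ₁ σ₂ =>
          if h : σ₁ = τ then
            fun a => eval (I.update n τ (Ty.semCast h a)) s σ₂
          else default

/-- `I` satisfies the formula `s` if `Î s = 1`. -/
def Satisfies (I : Interp) (s : Tm) : Prop := eval I s .base = true

/-- A formula is valid if every interpretation satisfies it. -/
def ValidFml (s : Tm) : Prop := ∀ I : Interp, Satisfies I s

/-- A sequent `A ⇒ s` is valid if every interpretation satisfying `A` satisfies `s`. -/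
def ValidSeq (A : Finset Tm) (s : Tm) : Prop :=
  ∀ I : Interp, (∀ t ∈ A, Satisfies I t) → Satisfies I s

/-- Finite disjunction (the empty disjunction is `⊥`). -/
def orList : List Tm → Tm
  | [] => botTm
  | [s] => s
  | s :: l => orTm s (orList l)

/-- Finite conjunction (the empty conjunction is `⊤`). -/
def andList : List Tm → Tm
  | [] => topTm
  | [s] => s
  | s :: l => andTm s (andList l)

/-- The argument types of a type (every type has the form `σ₁…σₙB`). -/
def Ty.args : Ty → List Ty
  | .base => []
  | .arrow σ τ => σ :: τ.args

/-- Tuples of values along a list of types. -/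
def Tup : List Ty → Type
  | [] => PUnit
  | σ :: l => σ.sem × Tup l

noncomputable instance TupFintype : (l : List Ty) → Fintype (Tup l)
  | [] => inferInstanceAs (Fintype PUnit)
  | σ :: l =>
      letI := TupFintype l
      inferInstanceAs (Fintype (σ.sem × Tup l))

/-- Applying a function value to a tuple of arguments (the result type is `B`). -/
def Ty.applyTup : (σ : Ty) → σ.sem → Tup σ.args → Bool
  | .base, a, _ => a
  | .arrow _ τ, f, p => τ.applyTup (f p.1) p.2

/-- Quote/identity data for each type in a list: a quote function and the term `≐`. -/
def ArgData : List Ty → Type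
  | [] => PUnit
  | σ :: l => ((σ.sem → Tm) × Tm) × ArgData l

/-- The conjunction list `x_k ≐_{σ_k} (↓_{σ_k} b_k), …` for a tuple `b`. -/
def eqConj : (l : List Ty) → ArgData l → ℕ → Tup l → List Tm
  | [], _, _, _ => []
  | σ :: l, (d, ds), k, (b, bs) =>
      (.app (.app d.2 (vr k σ)) (d.1 b)) :: eqConj l ds (k + 1) bs

/-- `λ x_k : σ_k. …` binding one variable for each type in the list. -/
def mkLams : (l : List Ty) → ℕ → Tm → Tm
  | [], _, body => body
  | σ :: l, k, body => .lam k σ (mkLams l (k + 1) body)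

/-- The body of the quote term
`↓_{σ₁…σₙB} a := λx₁…xₙ. ⋁_{b₁…bₙ, a b₁…bₙ = 1} ⋀_j x_j ≐_{σ_j} (↓_{σ_j} b_j)`. -/
noncomputable def quoteBodyAux (σ : Ty) (ad : ArgData σ.args) (a : σ.sem) : Tm :=
  mkLams σ.args 0 (orList
    ((((Finset.univ : Finset (Tup σ.args)).toList.filter
        (fun b => σ.applyTup a b))).map
      (fun b => andList (eqConj σ.args ad 0 b))))

/-- `∀σ := λf. ⋀_{a ∈ Bσ} f (↓σ a)`, given the quote function for `σ`. -/
noncomputable def allTmAux (σ : Ty) (q : σ.sem → Tm) : Tm :=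
  .lam 0 (.arrow σ .base)
    (andList (((Finset.univ : Finset σ.sem).toList).map
      (fun a => .app (vr 0 (.arrow σ .base)) (q a))))

mutual
  /-- The quote function `↓σ` together with the identity term `≐σ`. -/
  noncomputable def quoteEq : (σ : Ty) → ((σ.sem → Tm) × Tm)
    | .base =>
        (fun a => quoteBodyAux .base PUnit.unit a,
         .lam 0 .base (.lam 1 .base (equivTm (vr 0 .base) (vr 1 .base))))
    | .arrow σ τ =>
        (fun a => quoteBodyAux (.arrow σ τ) ((quoteEq σ, argData τ) : ArgData (σ :: τ.args)) a,
         .lam 0 (.arrow σ τ) (.lam 1 (.arrow σ τ)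
           (.app (allTmAux σ (quoteEq σ).1)
             (.lam 2 σ
               (.app (.app (quoteEq τ).2
                  (.app (vr 0 (.arrow σ τ)) (vr 2 σ)))
                (.app (vr 1 (.arrow σ τ)) (vr 2 σ)))))))
  /-- Quote/identity data for all argument types of a type. -/
  noncomputable def argData : (σ : Ty) → ArgData σ.args
    | .base => PUnit.unit
    | .arrow σ τ => ((quoteEq σ, argData τ) : ArgData (σ :: τ.args))
end

/-- The quote function `↓σ : Bσ → Λ`. -/
noncomputable def quote (σ : Ty) (a : σ.sem) : Tm := (quoteEq σ).1 a

/-- The term `≐σ : σσB` denoting the identity predicate on `Bσ`. -/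
noncomputable def eqTm (σ : Ty) : Tm := (quoteEq σ).2

/-- The term `∀σ : (σB)B`. -/
noncomputable def allTm (σ : Ty) : Tm := allTmAux σ (quote σ)


/-- Propositional formulas: `s ::= x | ⊥ | s → s` with `x` a variable of type `B`. -/
inductive Propositional : Tm → Prop
  | var (n : ℕ) : Propositional (vr n .base)
  | bot : Propositional botTm
  | imp {s t} : Propositional s → Propositional t → Propositional (impTm s t)

/-- A type-respecting substitution of terms for variables. -/
def IsSubstitution (ρ : ℕ × Ty → Tm) : Prop := ∀ n σ, HasTy (ρ (n, σ)) σ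

/-- A formula is tautologous if it is a substitution instance of a tautology
(a valid propositional formula). -/
def Tautologous (s : Tm) : Prop :=
  ∃ t ρ, Propositional t ∧ ValidFml t ∧ IsSubstitution ρ ∧ s = substAux ρ t

/-- The proof system: Triv, Weak, Ded, MP, DN, Lam and Boolean replacement (BR).
Sequents consist of a finite set of formulas and a formula. -/
inductive Ded : Finset Tm → Tm → Prop
  | triv {A s} : (∀ t ∈ A, HasTy t .base) → HasTy s .base → Ded (insert s A) s
  | weak {A s t} : HasTy s .base → Ded A t → Ded (insert s A) t
  | ded {A s t} : Ded (insert s A) t → Ded A (impTm s t)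
  | mp {A s t} : Ded A (impTm s t) → Ded A s → Ded A t
  | dn {A s} : Ded A (negTm (negTm s)) → Ded A s
  | lam {A s t} : Ded A s → LamEq s t → HasTy t .base → Ded A t
  | br {A s t} (C : Ctx) : C.Admissible A → Ded A (equivTm s t) →
      Ded A (C.fill s) → HasTy (C.fill t) .base → Ded A (C.fill t)


section Aux

@[simp] lemma semCast_self {σ : Ty} (h : σ = σ) (v : σ.sem) : Ty.semCast h v = v := rfl

lemma eval_var_eq (I : Interp) (n : ℕ) (τ σ : Ty) :
    eval I (.name (.var n τ)) σ = if h : τ = σ then Ty.semCast h (I n τ) else default := by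
  rw [eval.eq_def]

lemma eval_bot_eq (I : Interp) : eval I (.name .bot) .base = false := by
  rw [eval.eq_def]

lemma eval_imp_eq (I : Interp) :
    eval I (.name .imp) (.arrow .base (.arrow .base .base)) = fun a b => !a || b := by
  rw [eval.eq_def]; rfl

lemma eval_app_eq (I : Interp) (s t : Tm) (σ : Ty) :
    eval I (.app s t) σ = match typeOf t with
      | some τ => eval I s (.arrow τ σ) (eval I t τ)
      | none => default := by
  rw [eval.eq_def]

lemma eval_lam_eq (I : Interp) (n : ℕ) (τ : Ty) (s : Tm) (σ₁ σ₂ : Ty) :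
    eval I (.lam n τ s) (.arrow σ₁ σ₂) =
      if h : σ₁ = τ then fun a => eval (I.update n τ (Ty.semCast h a)) s σ₂ else default := by
  rw [eval.eq_def]; rfl

lemma update_self (I : Interp) (n : ℕ) (σ : Ty) (v : σ.sem) :
    I.update n σ v n σ = v := by
  simp [Interp.update]

lemma eval_vr (I : Interp) (n : ℕ) (σ : Ty) : eval I (vr n σ) σ = I n σ := by
  simp [vr, eval_var_eq, eval_bot_eq, eval_imp_eq, eval_app_eq, eval_lam_eq]

lemma typeOf_vr (n : ℕ) (σ : Ty) : typeOf (vr n σ) = some σ := rfl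

lemma typeOf_impTm {s t : Tm} (hs : typeOf s = some .base) (ht : typeOf t = some .base) :
    typeOf (impTm s t) = some .base := by
  simp [impTm, typeOf, hs, ht, Name.ty]

lemma eval_impTm (I : Interp) {s t : Tm} (hs : typeOf s = some .base)
    (ht : typeOf t = some .base) :
    eval I (impTm s t) .base = (!eval I s .base || eval I t .base) := by
  simp [impTm, eval_var_eq, eval_bot_eq, eval_imp_eq, eval_app_eq, eval_lam_eq, hs, ht] <;> rfl

end Aux
lemma typeOf_botTm : typeOf botTm = some .base := rfl

lemma typeOf_negTm {s : Tm} (hs : typeOf s = some .base) :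
    typeOf (negTm s) = some .base := typeOf_impTm hs typeOf_botTm

lemma eval_negTm (I : Interp) {s : Tm} (hs : typeOf s = some .base) :
    eval I (negTm s) .base = !eval I s .base := by
  rw [negTm, eval_impTm I hs typeOf_botTm]; simp [botTm, eval_var_eq, eval_bot_eq, eval_imp_eq, eval_app_eq, eval_lam_eq] <;> rfl

lemma typeOf_orTm {s t : Tm} (hs : typeOf s = some .base) (ht : typeOf t = some .base) :
    typeOf (orTm s t) = some .base := typeOf_impTm (typeOf_impTm hs ht) ht

lemma eval_orTm (I : Interp) {s t : Tm} (hs : typeOf s = some .base)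
    (ht : typeOf t = some .base) :
    eval I (orTm s t) .base = (eval I s .base || eval I t .base) := by
  rw [orTm, eval_impTm I (typeOf_impTm hs ht) ht, eval_impTm I hs ht]
  cases eval I s .base <;> cases eval I t .base <;> rfl

lemma typeOf_andTm {s t : Tm} (hs : typeOf s = some .base) (ht : typeOf t = some .base) :
    typeOf (andTm s t) = some .base :=
  typeOf_negTm (typeOf_orTm (typeOf_negTm hs) (typeOf_negTm ht))

lemma eval_andTm (I : Interp) {s t : Tm} (hs : typeOf s = some .base)
    (ht : typeOf t = some .base) :
    eval I (andTm s t) .base = (eval I s .base && eval I t .base) := by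
  rw [andTm, eval_negTm I (typeOf_orTm (typeOf_negTm hs) (typeOf_negTm ht)),
    eval_orTm I (typeOf_negTm hs) (typeOf_negTm ht), eval_negTm I hs, eval_negTm I ht]
  cases eval I s .base <;> cases eval I t .base <;> rfl

lemma typeOf_equivTm {s t : Tm} (hs : typeOf s = some .base) (ht : typeOf t = some .base) :
    typeOf (equivTm s t) = some .base :=
  typeOf_andTm (typeOf_impTm hs ht) (typeOf_impTm ht hs)

lemma eval_equivTm (I : Interp) {s t : Tm} (hs : typeOf s = some .base)
    (ht : typeOf t = some .base) :
    (eval I (equivTm s t) .base = true ↔ eval I s .base = eval I t .base) := by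
  rw [equivTm, eval_andTm I (typeOf_impTm hs ht) (typeOf_impTm ht hs),
    eval_impTm I hs ht, eval_impTm I ht hs]
  cases eval I s .base <;> cases eval I t .base <;> simp <;> exact ⟨fun _ => rfl, fun _ => rfl⟩

lemma typeOf_orList {l : List Tm} (h : ∀ s ∈ l, typeOf s = some .base) :
    typeOf (orList l) = some .base := by
  induction l with
  | nil => rfl
  | cons s l ih =>
    cases l with
    | nil => exact h s (by simp)
    | cons t l' =>
      rw [show orList (s :: t :: l') = orTm s (orList (t :: l')) from rfl]
      exact typeOf_orTm (h s (by simp)) (ih (fun u hu => h u (by simp [hu])))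

lemma eval_orList (I : Interp) {l : List Tm} (h : ∀ s ∈ l, typeOf s = some .base) :
    (eval I (orList l) .base = true ↔ ∃ s ∈ l, eval I s .base = true) := by
  induction l with
  | nil => simp [orList, botTm, eval_var_eq, eval_bot_eq, eval_imp_eq, eval_app_eq, eval_lam_eq]
  | cons s l ih =>
    cases l with
    | nil => simp [orList]
    | cons t l' =>
      rw [show orList (s :: t :: l') = orTm s (orList (t :: l')) from rfl, eval_orTm I (h s (by simp)) (typeOf_orList (fun u hu => h u (by simp [hu])))]
      erw [Bool.or_eq_true, ih (fun u hu => h u (by simp [hu]))]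
      simp <;> exact Iff.rfl

lemma typeOf_andList {l : List Tm} (h : ∀ s ∈ l, typeOf s = some .base) :
    typeOf (andList l) = some .base := by
  induction l with
  | nil => rfl
  | cons s l ih =>
    cases l with
    | nil => exact h s (by simp)
    | cons t l' =>
      rw [show andList (s :: t :: l') = andTm s (andList (t :: l')) from rfl]
      exact typeOf_andTm (h s (by simp)) (ih (fun u hu => h u (by simp [hu])))

lemma eval_andList (I : Interp) {l : List Tm} (h : ∀ s ∈ l, typeOf s = some .base) :
    (eval I (andList l) .base = true ↔ ∀ s ∈ l, eval I s .base = true) := by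
  induction l with
  | nil =>
      rw [show andList ([] : List Tm) = topTm from rfl, topTm, eval_impTm I typeOf_botTm typeOf_botTm]
      simp [botTm, eval_var_eq, eval_bot_eq, eval_imp_eq, eval_app_eq, eval_lam_eq] <;> rfl
  | cons s l ih =>
    cases l with
    | nil => simp [andList]
    | cons t l' =>
      rw [show andList (s :: t :: l') = andTm s (andList (t :: l')) from rfl, eval_andTm I (h s (by simp)) (typeOf_andList (fun u hu => h u (by simp [hu])))]
      erw [Bool.and_eq_true, ih (fun u hu => h u (by simp [hu]))]
      simp <;> exact fun _ _ => Iff.rfl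
def GoodQ (σ : Ty) (q : σ.sem → Tm) : Prop :=
  (∀ a, typeOf (q a) = some σ) ∧ (∀ (I : Interp) a, eval I (q a) σ = a)

def GoodE (σ : Ty) (e : Tm) : Prop :=
  typeOf e = some (.arrow σ (.arrow σ .base)) ∧
  ∀ (I : Interp) (x y : σ.sem),
    (eval I e (.arrow σ (.arrow σ .base)) x y = true ↔ x = y)

def GoodAD : (l : List Ty) → ArgData l → Prop
  | [], _ => True
  | σ :: l, (d, ds) => (GoodQ σ d.1 ∧ GoodE σ d.2) ∧ GoodAD l ds

/-- Update by a tuple of values at consecutive indices. -/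
def updTup (I : Interp) : (k : ℕ) → (l : List Ty) → Tup l → Interp
  | _, [], _ => I
  | k, σ :: l, (a, b) => updTup (I.update k σ a) (k + 1) l b

lemma updTup_lt {l : List Ty} : ∀ (I : Interp) (k m : ℕ) (b : Tup l) (τ : Ty),
    m < k → updTup I k l b m τ = I m τ := by
  induction l with
  | nil => intro I k m b τ _; rfl
  | cons σ l ih =>
    intro I k m b τ hm
    show updTup (I.update k σ b.1) (k + 1) l b.2 m τ = I m τ
    rw [ih _ (k+1) m b.2 τ (by omega)]
    simp [Interp.update]
    intro h; omega

lemma mkLams_typeOf : ∀ (σ : Ty) (k : ℕ) (body : Tm), typeOf body = some .base →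
    typeOf (mkLams σ.args k body) = some σ := by
  intro σ
  induction σ with
  | base => intro k body h; exact h
  | arrow σ τ ihσ ihτ =>
    intro k body h
    show typeOf (.lam k σ (mkLams τ.args (k+1) body)) = _
    simp [typeOf, ihτ (k+1) body h]

lemma mkLams_eval : ∀ (σ : Ty) (I : Interp) (k : ℕ) (body : Tm) (b : Tup σ.args),
    σ.applyTup (eval I (mkLams σ.args k body) σ) b = eval (updTup I k σ.args b) body .base := by
  intro σ
  induction σ with
  | base => intro I k body b; rfl
  | arrow σ τ ihσ ihτ =>
    intro I k body b
    show τ.applyTup ((eval I (.lam k σ (mkLams τ.args (k+1) body)) (.arrow σ τ)) b.1) b.2 = _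
    rw [show eval I (.lam k σ (mkLams τ.args (k+1) body)) (.arrow σ τ) =
      fun a => eval (I.update k σ a) (mkLams τ.args (k+1) body) τ by simp [eval_var_eq, eval_bot_eq, eval_imp_eq, eval_app_eq, eval_lam_eq] <;> rfl]
    exact ihτ (I.update k σ b.1) (k+1) body b.2
lemma eval_app (I : Interp) {t : Tm} (s : Tm) {τ : Ty} (σ : Ty) (ht : typeOf t = some τ) :
    eval I (.app s t) σ = eval I s (.arrow τ σ) (eval I t τ) := by
  simp [eval_var_eq, eval_bot_eq, eval_imp_eq, eval_app_eq, eval_lam_eq, ht]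

lemma eqConj_typeOf : ∀ (l : List Ty) (ad : ArgData l), GoodAD l ad →
    ∀ (k : ℕ) (c : Tup l) s, s ∈ eqConj l ad k c → typeOf s = some .base := by
  intro l
  induction l with
  | nil => intro ad _ k c s hs; simp [eqConj] at hs
  | cons σ l ih =>
    rintro ⟨d, ds⟩ ⟨⟨hq, he⟩, hds⟩ k ⟨c1, c2⟩ s hs
    rw [show eqConj (σ :: l) (d, ds) k (c1, c2) =
      (.app (.app d.2 (vr k σ)) (d.1 c1)) :: eqConj l ds (k + 1) c2 from rfl] at hs
    rcases List.mem_cons.mp hs with h | h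
    · subst h
      simp [typeOf, he.1, typeOf_vr, hq.1 c1, Name.ty]
    · exact ih ds hds (k+1) c2 s h

lemma eqConj_eval : ∀ (l : List Ty) (ad : ArgData l), GoodAD l ad →
    ∀ (I : Interp) (k : ℕ) (b c : Tup l),
    ((∀ s ∈ eqConj l ad k c, eval (updTup I k l b) s .base = true) ↔ b = c) := by
  intro l
  induction l with
  | nil =>
    intro ad _ I k b c
    simp [eqConj]
    rfl
  | cons σ l ih =>
    rintro ⟨d, ds⟩ ⟨⟨hq, he⟩, hds⟩ I k ⟨b1, b2⟩ ⟨c1, c2⟩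
    rw [show eqConj (σ :: l) (d, ds) k (c1, c2) =
      (.app (.app d.2 (vr k σ)) (d.1 c1)) :: eqConj l ds (k + 1) c2 from rfl]
    rw [show updTup I k (σ :: l) (b1, b2) = updTup (I.update k σ b1) (k + 1) l b2 from rfl]
    set I' := updTup (I.update k σ b1) (k + 1) l b2 with hI'
    have h1 : eval I' (.app (.app d.2 (vr k σ)) (d.1 c1)) .base = true ↔ b1 = c1 := by
      rw [eval_app I' _ .base (hq.1 c1), eval_app I' _ (.arrow σ .base) (typeOf_vr k σ)]
      rw [hq.2 I' c1, eval_vr]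
      rw [hI', updTup_lt _ (k+1) k b2 σ (by omega), update_self]
      exact he.2 I' b1 c1
    constructor
    · intro h
      have hb1 := h1.mp (h _ (by simp))
      have hb2 := (ih ds hds (I.update k σ b1) (k+1) b2 c2).mp
        (fun s hs => h s (by simp [hs]))
      rw [hb1, hb2]
    · rintro h
      injection h with e1 e2
      intro s hs
      rcases List.mem_cons.mp hs with h' | h'
      · subst h'; exact h1.mpr e1
      · exact (ih ds hds (I.update k σ b1) (k+1) b2 c2).mpr e2 s h'
lemma update_ne (I : Interp) {n : ℕ} {σ : Ty} {m : ℕ} {τ : Ty} (h : ¬(m = n ∧ τ = σ))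
    (v : σ.sem) : I.update n σ v m τ = I m τ := by
  rw [Interp.update, dif_neg h]

lemma quoteBody_typeOf {σ : Ty} {ad : ArgData σ.args} (h : GoodAD σ.args ad) (a : σ.sem) :
    typeOf (quoteBodyAux σ ad a) = some σ := by
  refine mkLams_typeOf σ 0 _ (typeOf_orList ?_)
  intro s hs
  rcases List.mem_map.mp hs with ⟨c, _, rfl⟩
  exact typeOf_andList (fun u hu => eqConj_typeOf σ.args ad h 0 c u hu)

lemma applyTup_ext : ∀ (σ : Ty) (x y : σ.sem),
    (∀ b, σ.applyTup x b = σ.applyTup y b) → x = y := by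
  intro σ
  induction σ with
  | base => intro x y h; exact h PUnit.unit
  | arrow σ τ ihσ ihτ =>
    intro x y h
    funext a
    exact ihτ (x a) (y a) (fun b => h (a, b))

lemma quoteBody_eval {σ : Ty} {ad : ArgData σ.args} (h : GoodAD σ.args ad)
    (I : Interp) (a : σ.sem) : eval I (quoteBodyAux σ ad a) σ = a := by
  refine applyTup_ext σ _ a (fun b => ?_)
  rw [quoteBodyAux, mkLams_eval]
  have hty : ∀ s ∈ ((Finset.univ : Finset (Tup σ.args)).toList.filter
      (fun c => σ.applyTup a c)).map (fun c => andList (eqConj σ.args ad 0 c)),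
      typeOf s = some Ty.base := by
    intro s hs
    rcases List.mem_map.mp hs with ⟨c, _, rfl⟩
    exact typeOf_andList (fun u hu => eqConj_typeOf σ.args ad h 0 c u hu)
  have := eval_orList (updTup I 0 σ.args b) hty
  refine Bool.eq_iff_iff.mpr ?_
  erw [this]
  constructor
  · rintro ⟨s, hs, hev⟩
    rcases List.mem_map.mp hs with ⟨c, hc, rfl⟩
    rcases List.mem_filter.mp hc with ⟨-, hc2⟩
    have hb : b = c := by
      rw [eval_andList _ (fun u hu => eqConj_typeOf σ.args ad h 0 c u hu)] at hev
      exact (eqConj_eval σ.args ad h I 0 b c).mp hev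
    subst hb
    exact hc2
  · intro hab
    refine ⟨andList (eqConj σ.args ad 0 b), List.mem_map.mpr ⟨b, List.mem_filter.mpr
      ⟨by simp, hab⟩, rfl⟩, ?_⟩
    rw [eval_andList _ (fun u hu => eqConj_typeOf σ.args ad h 0 b u hu)]
    exact (eqConj_eval σ.args ad h I 0 b b).mpr rfl
lemma typeOf_lam (n : ℕ) (σ : Ty) {s : Tm} {τ : Ty} (h : typeOf s = some τ) :
    typeOf (.lam n σ s) = some (.arrow σ τ) := by
  simp [typeOf, h]

lemma typeOf_app {s t : Tm} {σ τ : Ty} (hs : typeOf s = some (.arrow σ τ))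
    (ht : typeOf t = some σ) : typeOf (.app s t) = some τ := by
  simp [typeOf, hs, ht]

lemma typeOf_allTmAux {σ : Ty} {q : σ.sem → Tm} (hq : ∀ a, typeOf (q a) = some σ) :
    typeOf (allTmAux σ q) = some (.arrow (.arrow σ .base) .base) := by
  rw [allTmAux]
  have : typeOf (andList (((Finset.univ : Finset σ.sem).toList).map
      (fun a => .app (vr 0 (.arrow σ .base)) (q a)))) = some .base := by
    refine typeOf_andList ?_
    intro s hs
    rcases List.mem_map.mp hs with ⟨a, _, rfl⟩
    simp only [typeOf, vr, Name.ty, hq a]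
    simp
  simp [typeOf, this]

lemma allTmAux_sem {σ : Ty} {q : σ.sem → Tm} (hq : GoodQ σ q) (I : Interp)
    (f : (Ty.arrow σ .base).sem) :
    (eval I (allTmAux σ q) (.arrow (.arrow σ .base) .base) f = true ↔
      ∀ a : σ.sem, f a = true) := by
  rw [allTmAux]
  rw [show eval I (.lam 0 (.arrow σ .base) (andList (((Finset.univ : Finset σ.sem).toList).map
      (fun a => .app (vr 0 (.arrow σ .base)) (q a))))) (.arrow (.arrow σ .base) .base) =
    fun g => eval (I.update 0 (.arrow σ .base) g) (andList (((Finset.univ : Finset σ.sem).toList).map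
      (fun a => .app (vr 0 (.arrow σ .base)) (q a)))) .base by simp [eval_var_eq, eval_bot_eq, eval_imp_eq, eval_app_eq, eval_lam_eq] <;> rfl]
  set I' := I.update 0 (.arrow σ .base) f with hI'
  have hty : ∀ s ∈ ((Finset.univ : Finset σ.sem).toList).map
      (fun a => Tm.app (vr 0 (.arrow σ .base)) (q a)), typeOf s = some Ty.base := by
    intro s hs
    rcases List.mem_map.mp hs with ⟨a, _, rfl⟩
    simp only [typeOf, vr, Name.ty, hq.1 a]
    simp
  rw [eval_andList I' hty]
  constructor
  · intro h a
    have := h _ (List.mem_map.mpr ⟨a, by simp, rfl⟩)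
    rwa [eval_app I' _ .base (hq.1 a), eval_vr, hq.2 I' a, hI', update_self] at this
  · intro h s hs
    rcases List.mem_map.mp hs with ⟨a, _, rfl⟩
    rw [eval_app I' _ .base (hq.1 a), eval_vr, hq.2 I' a, hI', update_self]
    exact h a

lemma goodE_base :
    GoodE .base (.lam 0 .base (.lam 1 .base (equivTm (vr 0 .base) (vr 1 .base)))) := by
  constructor
  · exact typeOf_lam 0 .base (typeOf_lam 1 .base
      (typeOf_equivTm (typeOf_vr 0 .base) (typeOf_vr 1 .base)))
  · intro I x y
    rw [show eval I (.lam 0 .base (.lam 1 .base (equivTm (vr 0 .base) (vr 1 .base))))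
        (.arrow .base (.arrow .base .base)) x y =
      eval ((I.update 0 .base x).update 1 .base y)
        (equivTm (vr 0 .base) (vr 1 .base)) .base by simp [eval_var_eq, eval_bot_eq, eval_imp_eq, eval_app_eq, eval_lam_eq] <;> rfl]
    rw [eval_equivTm _ (typeOf_vr 0 .base) (typeOf_vr 1 .base), eval_vr, eval_vr]
    rw [update_ne _ (by simp) _, update_self, update_self]

lemma goodE_arrow (σ τ : Ty) (qσ : σ.sem → Tm) (eτ : Tm)
    (hqσ : GoodQ σ qσ) (heτ : GoodE τ eτ) :
    GoodE (.arrow σ τ)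
      (.lam 0 (.arrow σ τ) (.lam 1 (.arrow σ τ)
        (.app (allTmAux σ qσ)
          (.lam 2 σ
            (.app (.app eτ (.app (vr 0 (.arrow σ τ)) (vr 2 σ)))
              (.app (vr 1 (.arrow σ τ)) (vr 2 σ))))))) := by
  have hv02 : typeOf (Tm.app (vr 0 (.arrow σ τ)) (vr 2 σ)) = some τ :=
    typeOf_app (typeOf_vr 0 (.arrow σ τ)) (typeOf_vr 2 σ)
  have hv12 : typeOf (Tm.app (vr 1 (.arrow σ τ)) (vr 2 σ)) = some τ :=
    typeOf_app (typeOf_vr 1 (.arrow σ τ)) (typeOf_vr 2 σ)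
  have hb : typeOf (Tm.app (.app eτ (.app (vr 0 (.arrow σ τ)) (vr 2 σ)))
      (.app (vr 1 (.arrow σ τ)) (vr 2 σ))) = some .base :=
    typeOf_app (typeOf_app heτ.1 hv02) hv12
  have hinner : typeOf (Tm.lam 2 σ (.app (.app eτ (.app (vr 0 (.arrow σ τ)) (vr 2 σ)))
      (.app (vr 1 (.arrow σ τ)) (vr 2 σ)))) = some (.arrow σ .base) :=
    typeOf_lam 2 σ hb
  constructor
  · exact typeOf_lam 0 (.arrow σ τ) (typeOf_lam 1 (.arrow σ τ)
      (typeOf_app (typeOf_allTmAux hqσ.1) hinner))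
  · intro I f g
    rw [show eval I (Tm.lam 0 (.arrow σ τ) (.lam 1 (.arrow σ τ)
        (.app (allTmAux σ qσ)
          (.lam 2 σ
            (.app (.app eτ (.app (vr 0 (.arrow σ τ)) (vr 2 σ)))
              (.app (vr 1 (.arrow σ τ)) (vr 2 σ)))))))
        (.arrow (.arrow σ τ) (.arrow (.arrow σ τ) .base)) f g =
      eval ((I.update 0 (.arrow σ τ) f).update 1 (.arrow σ τ) g)
        (.app (allTmAux σ qσ)
          (.lam 2 σ (.app (.app eτ (.app (vr 0 (.arrow σ τ)) (vr 2 σ)))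
            (.app (vr 1 (.arrow σ τ)) (vr 2 σ)))))
        .base by simp [eval_var_eq, eval_bot_eq, eval_imp_eq, eval_app_eq, eval_lam_eq] <;> rfl]
    set I2 := (I.update 0 (.arrow σ τ) f).update 1 (.arrow σ τ) g with hI2
    rw [eval_app I2 _ .base hinner]
    rw [allTmAux_sem hqσ I2 _]
    have hkey : ∀ a : σ.sem,
        (eval I2 (Tm.lam 2 σ (.app (.app eτ (.app (vr 0 (.arrow σ τ)) (vr 2 σ)))
          (.app (vr 1 (.arrow σ τ)) (vr 2 σ)))) (.arrow σ .base) a = true ↔ f a = g a) := by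
      intro a
      rw [show eval I2 (Tm.lam 2 σ (.app (.app eτ (.app (vr 0 (.arrow σ τ)) (vr 2 σ)))
          (.app (vr 1 (.arrow σ τ)) (vr 2 σ)))) (.arrow σ .base) a =
        eval (I2.update 2 σ a) (.app (.app eτ (.app (vr 0 (.arrow σ τ)) (vr 2 σ)))
          (.app (vr 1 (.arrow σ τ)) (vr 2 σ))) .base by simp [eval_var_eq, eval_bot_eq, eval_imp_eq, eval_app_eq, eval_lam_eq] <;> rfl]
      set I3 := I2.update 2 σ a with hI3
      rw [eval_app I3 _ .base hv12, eval_app I3 _ (.arrow τ .base) hv02]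
      have e0 : eval I3 (Tm.app (vr 0 (.arrow σ τ)) (vr 2 σ)) τ = f a := by
        rw [eval_app I3 _ τ (typeOf_vr 2 σ), eval_vr, eval_vr, hI3, hI2]
        rw [update_self, update_ne _ (by simp) _, update_ne _ (by simp) _, update_self]
      have e1 : eval I3 (Tm.app (vr 1 (.arrow σ τ)) (vr 2 σ)) τ = g a := by
        rw [eval_app I3 _ τ (typeOf_vr 2 σ), eval_vr, eval_vr, hI3, hI2]
        rw [update_self, update_ne _ (by simp) _, update_self]
      rw [e0, e1]
      exact heτ.2 I3 (f a) (g a)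
    constructor
    · intro h
      funext a
      exact (hkey a).mp (h a)
    · intro h a
      exact (hkey a).mpr (congrFun h a)

mutual

theorem goodQE : ∀ σ : Ty, (GoodQ σ (quoteEq σ).1 ∧ GoodE σ (quoteEq σ).2)
  | .base => by
    refine ⟨⟨?_, ?_⟩, ?_⟩
    · intro a
      show typeOf ((quoteEq Ty.base).1 a) = _
      rw [quoteEq]
      exact quoteBody_typeOf (by trivial) a
    · intro I a
      show eval I ((quoteEq Ty.base).1 a) _ = _
      rw [quoteEq]
      exact quoteBody_eval (by trivial) I a
    · show GoodE _ ((quoteEq Ty.base).2)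
      rw [quoteEq]
      exact goodE_base
  | .arrow σ τ => by
    have hσ := goodQE σ
    have hτ := goodQE τ
    have hADτ := goodAD τ
    have hAD : GoodAD (Ty.arrow σ τ).args ((quoteEq σ, argData τ) : ArgData (σ :: τ.args)) :=
      ⟨hσ, hADτ⟩
    refine ⟨⟨?_, ?_⟩, ?_⟩
    · intro a
      show typeOf ((quoteEq (Ty.arrow σ τ)).1 a) = _
      rw [quoteEq]
      exact quoteBody_typeOf hAD a
    · intro I a
      show eval I ((quoteEq (Ty.arrow σ τ)).1 a) _ = _
      rw [quoteEq]
      exact quoteBody_eval hAD I a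
    · show GoodE _ ((quoteEq (Ty.arrow σ τ)).2)
      rw [quoteEq]
      exact goodE_arrow σ τ (quoteEq σ).1 (quoteEq τ).2 hσ.1 hτ.2

theorem goodAD : ∀ σ : Ty, GoodAD σ.args (argData σ)
  | .base => trivial
  | .arrow σ τ => by
    show GoodAD (σ :: τ.args) ((quoteEq σ, argData τ) : ArgData (σ :: τ.args))
    exact ⟨goodQE σ, goodAD τ⟩

end

/-- `B̂(∀σ) f = 1` iff `f c = 1` for every `c ∈ Bσ`. -/
theorem allTm_denotes (σ : Ty) (f : (Ty.arrow σ .base).sem) (I : Interp) :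
    eval I (allTm σ) (.arrow (.arrow σ .base) .base) f = true ↔
      ∀ c : σ.sem, f c = true := by
  rw [allTm]
  exact allTmAux_sem ⟨fun a => (goodQE σ).1.1 a, fun J a => (goodQE σ).1.2 J a⟩ I f

end PTT
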